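/- Let α > 0, β > 1 and γ > 0 satisfy γ·(β−1) > 1. Then there is no bounded solution of the kinetic system on ℝ emanating from the origin with a positive predator component: if (U,V) is a solution of the kinetic system on all of ℝ such that V(t₀) > 0 for some t₀ ∈ ℝ and (U(t), V(t)) → (0,0) as t → −∞, then (U,V) is unbounded, i.e. sup_{t ∈ ℝ} (|U(t)| + |V(t)|) = ∞. -/

import Mathlib

open Filter Topology

private lemma anti_of_deriv_nonpos' {f g : ℝ → ℝ} (hf : ∀ t, HasDerivAt f (g t) t)
    {a b : ℝ} (hab : a ≤ b) (hg : ∀ t, a ≤ t → t ≤ b → g t ≤ 0) : f b ≤ f a := by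
  have hdiff : Differentiable ℝ f := fun t => (hf t).differentiableAt
  have h := antitoneOn_of_deriv_nonpos (convex_Icc a b) hdiff.continuous.continuousOn
      (fun t _ => (hdiff t).differentiableWithinAt)
      (fun t ht => by
        rw [interior_Icc] at ht
        rw [(hf t).deriv]
        exact hg t ht.1.le ht.2.le)
  exact h (Set.left_mem_Icc.mpr hab) (Set.right_mem_Icc.mpr hab) hab

private lemma mono_of_deriv_nonneg' {f g : ℝ → ℝ} (hf : ∀ t, HasDerivAt f (g t) t)
    {a b : ℝ} (hab : a ≤ b) (hg : ∀ t, a ≤ t → t ≤ b → 0 ≤ g t) : f a ≤ f b := by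
  have hdiff : Differentiable ℝ f := fun t => (hf t).differentiableAt
  have h := monotoneOn_of_deriv_nonneg (convex_Icc a b) hdiff.continuous.continuousOn
      (fun t _ => (hdiff t).differentiableWithinAt)
      (fun t ht => by
        rw [interior_Icc] at ht
        rw [(hf t).deriv]
        exact hg t ht.1.le ht.2.le)
  exact h (Set.left_mem_Icc.mpr hab) (Set.right_mem_Icc.mpr hab) hab

private lemma exists_gt_of_deriv_neg' {f : ℝ → ℝ} {d s : ℝ} (hf : HasDerivAt f d s)
    (hd : d < 0) : ∃ t, s < t ∧ f t < f s := by
  have h1 : Tendsto (slope f s) (𝓝[≠] s) (𝓝 d) := hasDerivAt_iff_tendsto_slope.mp hf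
  have h2 : Tendsto (slope f s) (𝓝[>] s) (𝓝 d) :=
    h1.mono_left (nhdsWithin_mono _ fun y hy => ne_of_gt hy)
  have h3 : ∀ᶠ y in 𝓝[>] s, slope f s y < 0 := h2.eventually_lt_const hd
  have h4 : ∀ᶠ y in 𝓝[>] s, y ∈ Set.Ioi s := eventually_mem_nhdsWithin
  obtain ⟨y, hy1, hy2⟩ := (h3.and h4).exists
  refine ⟨y, hy2, ?_⟩
  rw [slope_def_field] at hy1
  rcases div_neg_iff.mp hy1 with ⟨h6, h7⟩ | ⟨h6, h7⟩
  · exfalso; simp only [Set.mem_Ioi] at hy2; linarith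
  · linarith

private lemma left_deriv_nonneg' {f : ℝ → ℝ} {d σ a : ℝ} (hf : HasDerivAt f d σ) (ha : a < σ)
    (h : ∀ t, a < t → t < σ → f t < f σ) : 0 ≤ d := by
  have h1 : Tendsto (slope f σ) (𝓝[≠] σ) (𝓝 d) := hasDerivAt_iff_tendsto_slope.mp hf
  have h2 : Tendsto (slope f σ) (𝓝[<] σ) (𝓝 d) :=
    h1.mono_left (nhdsWithin_mono _ fun y hy => ne_of_lt hy)
  refine ge_of_tendsto h2 ?_
  filter_upwards [Ioo_mem_nhdsLT ha] with t ht
  rw [slope_def_field]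
  have := h t ht.1 ht.2
  rw [div_nonneg_iff]
  exact Or.inr ⟨by linarith, by linarith [ht.2]⟩

/-- Rosenzweig–MacArthur kinetic system: if `γ(β-1) > 1`, there is no bounded entire
solution emanating from the origin with a positive predator component: any entire
solution with `V(t₀) > 0` for some `t₀` and `(U,V)(t) → (0,0)` as `t → -∞` is
unbounded. -/
theorem no_bounded_orbit_from_origin (α β γ : ℝ)
    (hα : 0 < α) (hβ : 1 < β) (hγ : 0 < γ) (h1 : 1 < γ * (β - 1)) :
    ∀ U V : ℝ → ℝ,
      (∀ t : ℝ, HasDerivAt U (α * U t * (γ - U t) - U t * V t / (1 + U t)) t ∧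
        HasDerivAt V (-(V t) + β * U t * V t / (1 + U t)) t) →
      (∃ t₀ : ℝ, 0 < V t₀) →
      Tendsto (fun t => (U t, V t)) atBot (nhds ((0, 0) : ℝ × ℝ)) →
      ∀ M : ℝ, ∃ t : ℝ, M < |U t| + |V t| := by
  intro U V hUV hVpos hlim M
  obtain ⟨t₀, ht₀⟩ := hVpos
  have hUd : ∀ t, HasDerivAt U (α * U t * (γ - U t) - U t * V t / (1 + U t)) t :=
    fun t => (hUV t).1
  have hVd : ∀ t, HasDerivAt V (-(V t) + β * U t * V t / (1 + U t)) t :=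
    fun t => (hUV t).2
  have hUdiff : Differentiable ℝ U := fun t => (hUd t).differentiableAt
  have hUcont : Continuous U := hUdiff.continuous
  -- derivative of U at a point where U = -1
  have hder_at : ∀ σ, U σ = -1 → HasDerivAt U (-(α * (γ + 1))) σ := by
    intro σ hσ
    have h := hUd σ
    have h0 : 1 + U σ = 0 := by rw [hσ]; ring
    rw [h0, div_zero, hσ] at h
    have he : α * (-1) * (γ - (-1)) - 0 = -(α * (γ + 1)) := by ring
    rwa [he] at h
  have hαγ : (0:ℝ) < α * (γ + 1) := mul_pos hα (by linarith)
  by_cases hneg : ∃ s, U s ≤ -1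
  · -- Case 1 : U reaches -1 somewhere
    obtain ⟨s, hs⟩ := hneg
    have hstrict : ∃ s', U s' < -1 := by
      rcases lt_or_eq_of_le hs with h | h
      · exact ⟨s, h⟩
      · obtain ⟨t, _, htlt⟩ := exists_gt_of_deriv_neg' (hder_at s h) (by linarith)
        exact ⟨t, by rw [h] at htlt; exact htlt⟩
    obtain ⟨s', hs'⟩ := hstrict
    -- forward invariance of {U < -1}
    have hinv : ∀ t, s' ≤ t → U t < -1 := by
      by_contra hcon
      push_neg at hcon
      obtain ⟨b, hb1, hb2⟩ := hcon
      set A : Set ℝ := {t | s' ≤ t ∧ -1 ≤ U t} with hA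
      have hclosed : IsClosed A := by
        have : A = Set.Ici s' ∩ U ⁻¹' (Set.Ici (-1)) := by
          ext x; simp [hA, Set.mem_setOf_eq, and_comm]
        rw [this]
        exact isClosed_Ici.inter (isClosed_Ici.preimage hUcont)
      have hne : A.Nonempty := ⟨b, hb1, hb2⟩
      have hbdd : BddBelow A := ⟨s', fun x hx => hx.1⟩
      have hmem := hclosed.csInf_mem hne hbdd
      set σ := sInf A with hσdef
      have hσ1 : s' ≤ σ := hmem.1
      have hσ2 : -1 ≤ U σ := hmem.2
      have hσs' : s' < σ := by
        rcases lt_or_eq_of_le hσ1 with h | h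
        · exact h
        · exfalso; rw [← h] at hσ2; linarith
      have hlt : ∀ t, s' < t → t < σ → U t < -1 := by
        intro t ht1 ht2
        by_contra h
        push_neg at h
        have hmem2 : t ∈ A := ⟨ht1.le, h⟩
        have := csInf_le hbdd hmem2
        rw [← hσdef] at this
        linarith
      have hUσ : U σ = -1 := by
        refine le_antisymm ?_ hσ2
        have htd : Tendsto U (𝓝[<] σ) (𝓝 (U σ)) := (hUcont.continuousAt).continuousWithinAt
        refine le_of_tendsto htd ?_
        filter_upwards [Ioo_mem_nhdsLT hσs'] with t ht
        exact (hlt t ht.1 ht.2).le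
      have hd0 := hder_at σ hUσ
      have hge : (0:ℝ) ≤ -(α * (γ + 1)) := by
        refine left_deriv_nonneg' hd0 hσs' ?_
        intro t hta htσ
        rw [hUσ]
        exact hlt t hta htσ
      linarith
    by_cases hVz : ∀ t, s' ≤ t → V t = 0
    · -- V identically 0 forward; U decreases linearly to -∞
      have hf : ∀ t, HasDerivAt (fun r => U r + α * (γ + 1) * r)
          ((α * U t * (γ - U t) - U t * V t / (1 + U t)) + α * (γ + 1) * 1) t :=
        fun t => (hUd t).add ((hasDerivAt_id t).const_mul (α * (γ + 1)))
      have hU_le : ∀ t, s' ≤ t → U t + α * (γ + 1) * t ≤ U s' + α * (γ + 1) * s' := by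
        intro t ht
        refine anti_of_deriv_nonpos' hf ht ?_
        intro r hr1 _
        have hUr := hinv r hr1
        rw [hVz r hr1, mul_zero, zero_div, sub_zero]
        have hfac : α * U r * (γ - U r) + α * (γ + 1) * 1
            = α * ((1 + U r) * (γ + 1 - U r)) := by ring
        rw [hfac]
        exact mul_nonpos_of_nonneg_of_nonpos hα.le
          (mul_nonpos_of_nonpos_of_nonneg (by linarith) (by linarith))
      set C := U s' + α * (γ + 1) * s' with hC
      set t := max s' ((C + M + 1) / (α * (γ + 1))) with htdef
      have ht1 : s' ≤ t := le_max_left _ _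
      have ht2 : (C + M + 1) / (α * (γ + 1)) ≤ t := le_max_right _ _
      have ht3 : C + M + 1 ≤ α * (γ + 1) * t := by
        rw [div_le_iff₀ hαγ] at ht2
        linarith
      have hUt : U t ≤ -(M + 1) := by
        have := hU_le t ht1
        linarith
      refine ⟨t, ?_⟩
      have hna : -(U t) ≤ |U t| := neg_le_abs (U t)
      linarith [abs_nonneg (V t)]
    · -- V nonzero somewhere forward; V blows up exponentially
      push_neg at hVz
      obtain ⟨s₁, hs₁, hVs₁⟩ := hVz
      set k := 2 * (β - 1) with hk
      have hkpos : 0 < k := by rw [hk]; linarith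
      have hg : ∀ t, HasDerivAt (fun r => V r * V r * Real.exp (-k * r))
          (((-(V t) + β * U t * V t / (1 + U t)) * V t
              + V t * (-(V t) + β * U t * V t / (1 + U t))) * Real.exp (-k * t)
            + V t * V t * (Real.exp (-k * t) * (-k * 1))) t := by
        intro t
        exact ((hVd t).mul (hVd t)).mul (((hasDerivAt_id t).const_mul (-k)).exp)
      have hmono : ∀ t, s₁ ≤ t →
          V s₁ * V s₁ * Real.exp (-k * s₁) ≤ V t * V t * Real.exp (-k * t) := by
        intro t ht
        refine mono_of_deriv_nonneg' hg ht ?_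
        intro r hr1 _
        have hUr : U r < -1 := hinv r (le_trans hs₁ hr1)
        have h1U : 1 + U r < 0 := by linarith
        have h1Une : 1 + U r ≠ 0 := ne_of_lt h1U
        have hVd' : -(V r) + β * U r * V r / (1 + U r)
            = (-1 + β * U r / (1 + U r)) * V r := by
          field_simp
        rw [hVd']
        set c := -1 + β * U r / (1 + U r) with hc
        have hcge : β - 1 ≤ c := by
          rw [hc]
          have hle : β ≤ β * U r / (1 + U r) := by
            rw [le_div_iff_of_neg h1U]
            nlinarith
          linarith
        clear_value c
        have heq : (c * V r * V r + V r * (c * V r)) * Real.exp (-k * r)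
              + V r * V r * (Real.exp (-k * r) * (-k * 1))
            = V r * V r * Real.exp (-k * r) * (2 * c - k) := by ring
        rw [heq]
        refine mul_nonneg (mul_nonneg (mul_self_nonneg _) (Real.exp_pos _).le) ?_
        rw [hk]; linarith
      have hε : 0 < V s₁ * V s₁ * Real.exp (-k * s₁) :=
        mul_pos (mul_self_pos.mpr hVs₁) (Real.exp_pos _)
      set ε := V s₁ * V s₁ * Real.exp (-k * s₁) with hεdef
      have htend : Tendsto (fun t => ε * Real.exp (k * t)) atTop atTop := by
        have h1 : Tendsto (fun t : ℝ => k * t) atTop atTop :=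
          tendsto_id.const_mul_atTop hkpos
        exact (Real.tendsto_exp_atTop.comp h1).const_mul_atTop hε
      obtain ⟨t, ht, hts₁⟩ :=
        ((htend.eventually_gt_atTop (M ^ 2)).and (eventually_ge_atTop s₁)).exists
      have hgm : ε ≤ V t * V t * Real.exp (-k * t) := hmono t hts₁
      have h5 := mul_le_mul_of_nonneg_right hgm (Real.exp_pos (k * t)).le
      have e1 : Real.exp (-k * t) * Real.exp (k * t) = 1 := by
        rw [← Real.exp_add, show -k * t + k * t = 0 by ring, Real.exp_zero]
      have h5' : ε * Real.exp (k * t) ≤ V t * V t := by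
        calc ε * Real.exp (k * t)
            = V s₁ * V s₁ * Real.exp (-k * s₁) * Real.exp (k * t) := by rw [hεdef]
          _ ≤ V t * V t * Real.exp (-k * t) * Real.exp (k * t) := h5
          _ = V t * V t := by rw [mul_assoc, e1, mul_one]
      refine ⟨t, ?_⟩
      have hMV : M < |V t| := by
        refine lt_of_pow_lt_pow_left₀ 2 (abs_nonneg (V t)) ?_
        rw [sq_abs]
        calc M ^ 2 < ε * Real.exp (k * t) := ht
          _ ≤ V t * V t := h5'
          _ = V t ^ 2 := (pow_two (V t)).symm
      linarith [abs_nonneg (U t)]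
  · -- Case 2 : U > -1 everywhere; derive a contradiction
    push_neg at hneg
    exfalso
    have h1U : ∀ t, 0 < 1 + U t := fun t => by linarith [hneg t]
    have hVdc : ∀ t, -(V t) + β * U t * V t / (1 + U t)
        = (-1 + β * U t / (1 + U t)) * V t := by
      intro t
      have := ne_of_gt (h1U t)
      field_simp
    have hUlim : Tendsto U atBot (𝓝 0) := by
      have := (continuous_fst.tendsto ((0 : ℝ), (0 : ℝ))).comp hlim
      exact this
    have hVlim : Tendsto V atBot (𝓝 0) := by
      have := (continuous_snd.tendsto ((0 : ℝ), (0 : ℝ))).comp hlim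
      exact this
    set δ := 1 / (4 * β) with hδ
    have hβ0 : (0:ℝ) < β := by linarith
    have hδpos : 0 < δ := by rw [hδ]; positivity
    have hev : ∀ᶠ t in atBot, |U t| < δ := by
      have := Metric.tendsto_nhds.mp hUlim δ hδpos
      filter_upwards [this] with t ht
      simpa [Real.dist_eq] using ht
    obtain ⟨T, hT⟩ := eventually_atBot.mp hev
    -- coefficient bound on (-∞, T]
    have hcle : ∀ t, t ≤ T → -1 + β * U t / (1 + U t) ≤ -(1/2) := by
      intro t ht
      have habs := abs_lt.mp (hT t ht)
      have hδ4 : δ < 1 / 4 := by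
        rw [hδ]
        rw [div_lt_div_iff₀ (by linarith) (by norm_num)]
        linarith
      have e2 : β * δ = 1 / 4 := by
        rw [hδ]
        field_simp
      have hUub : β * U t ≤ 1 / 4 := by
        have := mul_le_mul_of_nonneg_left habs.2.le hβ0.le
        linarith
      have hdiv : β * U t / (1 + U t) ≤ 1 / 2 := by
        rw [div_le_iff₀ (h1U t)]
        nlinarith [habs.1, hδ4]
      linarith
    have hg : ∀ t, HasDerivAt (fun r => V r * V r * Real.exp r)
        (((-(V t) + β * U t * V t / (1 + U t)) * V t
            + V t * (-(V t) + β * U t * V t / (1 + U t))) * Real.exp t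
          + V t * V t * Real.exp t) t := by
      intro t
      exact ((hVd t).mul (hVd t)).mul (Real.hasDerivAt_exp t)
    -- V vanishes on (-∞, T]
    have hzero : ∀ t, t ≤ T → V t = 0 := by
      intro t ht
      have hflim : Tendsto (fun s => V s * V s * Real.exp s) atBot (𝓝 0) := by
        have h2 : Tendsto (fun s => V s * V s) atBot (𝓝 0) := by
          simpa using hVlim.mul hVlim
        simpa using h2.mul Real.tendsto_exp_atBot
      have hfle : V t * V t * Real.exp t ≤ 0 := by
        refine ge_of_tendsto hflim ?_
        filter_upwards [eventually_le_atBot t] with s hsle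
        refine anti_of_deriv_nonpos' hg hsle ?_
        intro r _ hr2
        have hrT : r ≤ T := le_trans hr2 ht
        have hcr := hcle r hrT
        rw [hVdc r]
        set c := -1 + β * U r / (1 + U r) with hc
        clear_value c
        have heq : (c * V r * V r + V r * (c * V r)) * Real.exp r + V r * V r * Real.exp r
            = V r * V r * Real.exp r * (2 * c + 1) := by ring
        rw [heq]
        exact mul_nonpos_of_nonneg_of_nonpos
          (mul_nonneg (mul_self_nonneg _) (Real.exp_pos r).le) (by linarith)
      have h6 : V t * V t ≤ 0 := by nlinarith [Real.exp_pos t]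
      have h7 : V t * V t = 0 := le_antisymm h6 (mul_self_nonneg _)
      exact mul_self_eq_zero.mp h7
    rcases le_or_gt t₀ T with hcase | hcase
    · exact absurd (hzero t₀ hcase) (ne_of_gt ht₀)
    · -- forward uniqueness from T to t₀ via a compact coefficient bound
      have hccont : ContinuousOn (fun t => -1 + β * U t / (1 + U t)) (Set.Icc T t₀) := by
        apply Continuous.continuousOn
        exact continuous_const.add
          (Continuous.div (continuous_const.mul hUcont) (continuous_const.add hUcont)
            (fun t => ne_of_gt (h1U t)))
      obtain ⟨K, hK⟩ := (isCompact_Icc).exists_bound_of_continuousOn hccont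
      have hgK : ∀ t, HasDerivAt (fun r => V r * V r * Real.exp (-(2 * K) * r))
          (((-(V t) + β * U t * V t / (1 + U t)) * V t
              + V t * (-(V t) + β * U t * V t / (1 + U t))) * Real.exp (-(2 * K) * t)
            + V t * V t * (Real.exp (-(2 * K) * t) * (-(2 * K) * 1))) t := by
        intro t
        exact ((hVd t).mul (hVd t)).mul (((hasDerivAt_id t).const_mul (-(2 * K))).exp)
      have hanti : V t₀ * V t₀ * Real.exp (-(2 * K) * t₀)
          ≤ V T * V T * Real.exp (-(2 * K) * T) := by
        refine anti_of_deriv_nonpos' hgK hcase.le ?_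
        intro r hr1 hr2
        have hcr : |(-1 + β * U r / (1 + U r))| ≤ K := by
          have := hK r ⟨hr1, hr2⟩
          simpa [Real.norm_eq_abs] using this
        rw [hVdc r]
        set c := -1 + β * U r / (1 + U r) with hc
        have hcK : c ≤ K := le_trans (le_abs_self c) hcr
        clear_value c
        have heq : (c * V r * V r + V r * (c * V r)) * Real.exp (-(2 * K) * r)
              + V r * V r * (Real.exp (-(2 * K) * r) * (-(2 * K) * 1))
            = V r * V r * Real.exp (-(2 * K) * r) * (2 * c - 2 * K) := by ring
        rw [heq]
        exact mul_nonpos_of_nonneg_of_nonpos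
          (mul_nonneg (mul_self_nonneg _) (Real.exp_pos _).le) (by linarith)
      have hVT := hzero T le_rfl
      rw [hVT] at hanti
      simp only [mul_zero, zero_mul] at hanti
      nlinarith [Real.exp_pos (-(2 * K) * t₀), mul_pos ht₀ ht₀,
        mul_pos (mul_pos ht₀ ht₀) (Real.exp_pos (-(2 * K) * t₀))]
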